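/- One-sided directional derivative of MLU: for any path p, the right directional derivative of M(R) = max_e f_e(R)/c(e) in the coordinate direction of r_p equals max over edges e achieving the maximum (f_e(R)/c(e) = M(R)) and contained in p of D_p/c(e), or 0 if no maximizing edge lies on p, provided D_p ≥ 0. -/

import Mathlib

open Finset

open scoped Classical in
theorem stmt10 {E Φ : Type*} [Fintype E] [Nonempty E] [Fintype Φ] [DecidableEq E]
    [DecidableEq Φ]
    (c : E → ℝ) (hc : ∀ e, 0 < c e) (edges : Φ → Finset E)
    (D : Φ → ℝ) (hD : ∀ q, 0 ≤ D q)
    (R : Φ → ℝ) (p : Φ) :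
    let f : E → (Φ → ℝ) → ℝ := fun e R' =>
      ∑ q ∈ univ.filter (fun q => e ∈ edges q), D q * R' q
    let M : (Φ → ℝ) → ℝ := fun R' =>
      univ.sup' univ_nonempty (fun e => f e R' / c e)
    let A : Finset E := univ.filter (fun e => f e R / c e = M R ∧ e ∈ edges p)
    let d : ℝ := if h : A.Nonempty then A.sup' h (fun e => D p / c e) else 0
    HasDerivWithinAt (fun t : ℝ => M (fun q => R q + (if q = p then t else 0)))
      d (Set.Ici 0) 0 := by
  intro f M A d
  have hcne : ∀ e : E, (c e) ≠ 0 := fun e => (hc e).ne'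
  set s0 : E → ℝ := fun e => if e ∈ edges p then D p else 0 with hs0
  have hs0nn : ∀ e, 0 ≤ s0 e / c e := by
    intro e
    apply div_nonneg _ (hc e).le
    simp only [hs0]
    split
    · exact hD p
    · exact le_refl 0
  -- the value of f along the perturbation
  have hf : ∀ (e : E) (t : ℝ), f e (fun q => R q + (if q = p then t else 0))
      = f e R + s0 e * t := by
    intro e t
    simp only [f, mul_add]
    rw [Finset.sum_add_distrib]
    congr 1
    have : ∀ q ∈ univ.filter (fun q => e ∈ edges q),
        D q * (if q = p then t else 0) = if q = p then D p * t else 0 := by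
      intro q _
      split
      · rename_i h; subst h; ring
      · ring
    rw [Finset.sum_congr rfl this, Finset.sum_ite_eq']
    simp only [Finset.mem_filter, Finset.mem_univ, true_and, hs0, ite_mul, zero_mul]
  have key : ∀ t : ℝ, M (fun q => R q + (if q = p then t else 0))
      = univ.sup' univ_nonempty (fun e => f e R / c e + (s0 e / c e) * t) := by
    intro t
    apply Finset.sup'_congr _ rfl
    intro e _
    rw [hf]
    field_simp
  -- d is nonnegative
  have hdnn : 0 ≤ d := by
    simp only [d]
    split
    · rename_i h
      obtain ⟨e, he⟩ := h
      exact le_trans (div_nonneg (hD p) (hc e).le) (Finset.le_sup' (fun e' => D p / c e') he)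
    · exact le_refl 0
  -- slopes of maximizing edges are at most d
  have hslope_le : ∀ e : E, f e R / c e = M R → s0 e / c e ≤ d := by
    intro e he
    by_cases hep : e ∈ edges p
    · have heA : e ∈ A := by simp [A, he, hep]
      have hne : A.Nonempty := ⟨e, heA⟩
      have : D p / c e ≤ A.sup' hne (fun e => D p / c e) := Finset.le_sup' (fun e' => D p / c e') heA
      simp only [d, dif_pos hne]
      simpa [hs0, hep] using this
    · simp only [hs0, if_neg hep, zero_div]
      exact hdnn
  -- lower bound: some edge achieves M R + d * t
  have hlow : ∀ t : ℝ, ∃ e : E, f e R / c e + (s0 e / c e) * t = M R + d * t := by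
    intro t
    by_cases hA : A.Nonempty
    · obtain ⟨e, heA, hsup⟩ := Finset.exists_mem_eq_sup' hA (fun e => D p / c e)
      simp only [A, Finset.mem_filter, Finset.mem_univ, true_and] at heA
      refine ⟨e, ?_⟩
      have hd : d = D p / c e := by simp only [d, dif_pos hA]; exact hsup
      rw [heA.1, hd]
      simp [hs0, heA.2]
    · obtain ⟨e, -, hsup⟩ := Finset.exists_mem_eq_sup' (univ_nonempty (α := E))
        (fun e => f e R / c e)
      refine ⟨e, ?_⟩
      have hep : e ∉ edges p := by
        intro hep
        exact hA ⟨e, by simp [A, hsup.symm, hep]; rfl⟩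
      have hd : d = 0 := by simp [d, hA]
      rw [hd, ← hsup]
      simp [hs0, hep, M]
  -- eventual upper bound for each edge
  have hup : ∀ e : E, ∀ᶠ t in nhdsWithin (0:ℝ) (Set.Ici 0),
      f e R / c e + (s0 e / c e) * t ≤ M R + d * t := by
    intro e
    by_cases hs : s0 e / c e ≤ d
    · filter_upwards [self_mem_nhdsWithin] with t ht
      have h1 : f e R / c e ≤ M R := Finset.le_sup' (fun e => f e R / c e) (mem_univ e)
      have h2 : (s0 e / c e) * t ≤ d * t :=
        mul_le_mul_of_nonneg_right hs (Set.mem_Ici.mp ht)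
      linarith
    · push_neg at hs
      have hlt : f e R / c e < M R := by
        have hle : f e R / c e ≤ M R := Finset.le_sup' (fun e => f e R / c e) (mem_univ e)
        rcases lt_or_eq_of_le hle with h | h
        · exact h
        · exact absurd (hslope_le e h) (not_le.mpr hs)
      have h1 : Filter.Tendsto (fun t : ℝ => f e R / c e + (s0 e / c e) * t)
          (nhdsWithin (0:ℝ) (Set.Ici 0)) (nhds (f e R / c e)) := by
        have : ContinuousAt (fun t : ℝ => f e R / c e + (s0 e / c e) * t) 0 := by
          fun_prop
        simpa using this.continuousWithinAt.tendsto
      have h2 : Filter.Tendsto (fun t : ℝ => M R + d * t)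
          (nhdsWithin (0:ℝ) (Set.Ici 0)) (nhds (M R)) := by
        have : ContinuousAt (fun t : ℝ => M R + d * t) 0 := by fun_prop
        simpa using this.continuousWithinAt.tendsto
      filter_upwards [h1.eventually_lt h2 hlt] with t ht using ht.le
  -- eventual equality with the affine function
  have heq : ∀ᶠ t in nhdsWithin (0:ℝ) (Set.Ici 0),
      M (fun q => R q + (if q = p then t else 0)) = M R + d * t := by
    have hall : ∀ᶠ t in nhdsWithin (0:ℝ) (Set.Ici 0), ∀ e : E,
        f e R / c e + (s0 e / c e) * t ≤ M R + d * t := by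
      rw [Filter.eventually_all]
      exact hup
    filter_upwards [hall] with t ht
    rw [key t]
    apply le_antisymm
    · exact Finset.sup'_le _ _ fun e _ => ht e
    · obtain ⟨e, he⟩ := hlow t
      rw [← he]
      exact Finset.le_sup' (fun e' => f e' R / c e' + (s0 e' / c e') * t) (mem_univ e)
  -- conclude
  have haff : HasDerivWithinAt (fun t : ℝ => M R + d * t) d (Set.Ici 0) 0 := by
    have := ((hasDerivAt_id (0:ℝ)).const_mul d).const_add (M R)
    simpa using this.hasDerivWithinAt
  apply haff.congr_of_eventuallyEq heq
  have h0 : (fun q => R q + (if q = p then (0:ℝ) else 0)) = R := by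
    funext q; simp
  simp [h0]
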